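/- For 0 < a < b and τ > 0, the Z-type ratio satisfies (1 + (τ/b)^2)/(1 + (τ/a)^2) > (a/b)^2; consequently, with d_0 = 1/6, d_1 = 2/3, d_2 = 1/6, if β_0 < β_1 and β_0 < β_2 then d_0 + d_1(β_0/β_1)^2 + d_2(β_0/β_2)^2 < d_0 + d_1·(1+(τ/β_1)^2)/(1+(τ/β_0)^2) + d_2·(1+(τ/β_2)^2)/(1+(τ/β_0)^2) < 1, and hence ω_0^{JS} > ω_0^{ZA} > d_0. -/

import Mathlib

lemma key_gt (τ a b : ℝ) (hτ : 0 < τ) (ha : 0 < a) (hab : a < b) :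
    (1 + (τ / b) ^ 2) / (1 + (τ / a) ^ 2) > (a / b) ^ 2 := by
  have hb : 0 < b := ha.trans hab
  have hpos : (0:ℝ) < 1 + (τ / a) ^ 2 := by positivity
  rw [gt_iff_lt, lt_div_iff₀ hpos]
  have hab2 : (a / b) ^ 2 < 1 := by
    have : a / b < 1 := (div_lt_one hb).2 hab
    have h0 : 0 ≤ a / b := by positivity
    nlinarith
  have : (a / b) ^ 2 * (τ / a) ^ 2 = (τ / b) ^ 2 := by
    field_simp
  nlinarith

lemma key_lt (τ a b : ℝ) (hτ : 0 < τ) (ha : 0 < a) (hab : a < b) :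
    (1 + (τ / b) ^ 2) / (1 + (τ / a) ^ 2) < 1 := by
  have hb : 0 < b := ha.trans hab
  have hpos : (0:ℝ) < 1 + (τ / a) ^ 2 := by positivity
  rw [div_lt_one hpos]
  have h1 : τ / b < τ / a := by
    apply div_lt_div_of_pos_left hτ ha hab
  have h2 : 0 < τ / b := by positivity
  nlinarith

theorem stmt_12 (β0 β1 β2 τ : ℝ) (h0 : 0 < β0) (h1 : 0 < β1) (h2 : 0 < β2)
    (h01 : β0 < β1) (h02 : β0 < β2) (hτ : 0 < τ) :
    let d0 : ℝ := 1/6; let d1 : ℝ := 2/3; let d2 : ℝ := 1/6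
    let ωJS := d0 / (d0 + d1 * (β0 / β1) ^ 2 + d2 * (β0 / β2) ^ 2)
    let ωZA := d0 / (d0 + d1 * ((1 + (τ / β1) ^ 2) / (1 + (τ / β0) ^ 2)) +
        d2 * ((1 + (τ / β2) ^ 2) / (1 + (τ / β0) ^ 2)))
    (∀ a b : ℝ, 0 < a → a < b → (1 + (τ / b) ^ 2) / (1 + (τ / a) ^ 2) > (a / b) ^ 2) ∧
    d0 + d1 * (β0 / β1) ^ 2 + d2 * (β0 / β2) ^ 2 <
      d0 + d1 * ((1 + (τ / β1) ^ 2) / (1 + (τ / β0) ^ 2)) +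
        d2 * ((1 + (τ / β2) ^ 2) / (1 + (τ / β0) ^ 2)) ∧
    d0 + d1 * ((1 + (τ / β1) ^ 2) / (1 + (τ / β0) ^ 2)) +
        d2 * ((1 + (τ / β2) ^ 2) / (1 + (τ / β0) ^ 2)) < 1 ∧
    ωJS > ωZA ∧ ωZA > d0 := by
  intro d0 d1 d2 ωJS ωZA
  have g1 := key_gt τ β0 β1 hτ h0 h01
  have g2 := key_gt τ β0 β2 hτ h0 h02
  have l1 := key_lt τ β0 β1 hτ h0 h01
  have l2 := key_lt τ β0 β2 hτ h0 h02
  have hsum : d0 + d1 * (β0 / β1) ^ 2 + d2 * (β0 / β2) ^ 2 <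
      d0 + d1 * ((1 + (τ / β1) ^ 2) / (1 + (τ / β0) ^ 2)) +
        d2 * ((1 + (τ / β2) ^ 2) / (1 + (τ / β0) ^ 2)) := by
    simp only [d0, d1, d2]; nlinarith
  have hlt1 : d0 + d1 * ((1 + (τ / β1) ^ 2) / (1 + (τ / β0) ^ 2)) +
        d2 * ((1 + (τ / β2) ^ 2) / (1 + (τ / β0) ^ 2)) < 1 := by
    simp only [d0, d1, d2]; nlinarith
  have hJSpos : 0 < d0 + d1 * (β0 / β1) ^ 2 + d2 * (β0 / β2) ^ 2 := by
    simp only [d0, d1, d2]; positivity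
  refine ⟨fun a b ha hab => key_gt τ a b hτ ha hab, hsum, hlt1, ?_, ?_⟩
  · exact div_lt_div_of_pos_left (by norm_num : (0:ℝ) < d0) hJSpos hsum
  · have := div_lt_div_of_pos_left (by norm_num : (0:ℝ) < d0)
      (hJSpos.trans hsum) hlt1
    simpa using this
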